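/- Let A, B, C be noncollinear points in ℝ² and let K be a set of points that is dense in the triangle with vertices A, B, C (the convex hull of {A, B, C}). Then T(K) is dense in ℝ². -/

import Mathlib

open Set Filter

noncomputable section

/-- The line through two points in the plane `ℝ × ℝ`. -/
def line (a b : ℝ × ℝ) : AffineSubspace ℝ (ℝ × ℝ) := affineSpan ℝ {a, b}

/-- The intersection operation `T`: the set of all intersection points of pairs of
distinct lines through pairs of distinct points of `S`. -/
def interT (S : Set (ℝ × ℝ)) : Set (ℝ × ℝ) :=
  {x | ∃ a ∈ S, ∃ b ∈ S, ∃ c ∈ S, ∃ d ∈ S,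
    a ≠ b ∧ c ≠ d ∧ line a b ≠ line c d ∧ x ∈ line a b ∧ x ∈ line c d}

/-- cross product / determinant of two plane vectors -/
def xdet (u v : ℝ × ℝ) : ℝ := u.1 * v.2 - u.2 * v.1

/-- intersection point of lines a-b and c-d (Cramer) -/
def ipt (a b c d : ℝ × ℝ) : ℝ × ℝ :=
  a + (xdet (c - a) (d - c) / xdet (b - a) (d - c)) • (b - a)

lemma mem_line_of_smul (a b : ℝ × ℝ) (s : ℝ) : a + s • (b - a) ∈ line a b := by
  have := AffineMap.lineMap_mem_affineSpan_pair (k := ℝ) s a b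
  rwa [AffineMap.lineMap_apply_module', add_comm] at this

lemma ipt_mem_left (a b c d : ℝ × ℝ) : ipt a b c d ∈ line a b :=
  mem_line_of_smul _ _ _

lemma ipt_eq_right (a b c d : ℝ × ℝ) (h : xdet (b - a) (d - c) ≠ 0) :
    ipt a b c d = c + (xdet (c - a) (b - a) / xdet (b - a) (d - c)) • (d - c) := by
  unfold ipt xdet at *
  obtain ⟨a1, a2⟩ := a; obtain ⟨b1, b2⟩ := b; obtain ⟨c1, c2⟩ := c; obtain ⟨d1, d2⟩ := d
  simp only [Prod.mk_sub_mk, Prod.smul_mk, Prod.mk_add_mk, Prod.mk.injEq, smul_eq_mul] at *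
  constructor <;> rw [div_mul_eq_mul_div, div_mul_eq_mul_div, add_div' _ _ _ h, add_div' _ _ _ h, div_left_inj' h] <;> ring

lemma ipt_mem_right (a b c d : ℝ × ℝ) (h : xdet (b - a) (d - c) ≠ 0) :
    ipt a b c d ∈ line c d := by
  rw [ipt_eq_right a b c d h]; exact mem_line_of_smul _ _ _

lemma ipt_eq (a b c d x : ℝ × ℝ) (s t : ℝ) (h : xdet (b - a) (d - c) ≠ 0)
    (hs : x = a + s • (b - a)) (ht : x = c + t • (d - c)) : ipt a b c d = x := by
  have h1 : a.1 + s * (b.1 - a.1) = c.1 + t * (d.1 - c.1) := by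
    have := congrArg Prod.fst (hs.symm.trans ht); simpa using this
  have h2 : a.2 + s * (b.2 - a.2) = c.2 + t * (d.2 - c.2) := by
    have := congrArg Prod.snd (hs.symm.trans ht); simpa using this
  have key : xdet (c - a) (d - c) = s * xdet (b - a) (d - c) := by
    unfold xdet; simp only [Prod.fst_sub, Prod.snd_sub]
    linear_combination (d.1 - c.1) * h2 - (d.2 - c.2) * h1
  unfold ipt
  rw [key, mul_div_assoc, div_self h, mul_one, ← hs]

lemma line_ne (a b c d : ℝ × ℝ) (h : xdet (b - a) (d - c) ≠ 0) : line a b ≠ line c d := by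
  intro he
  have hc : c ∈ line a b := by rw [he]; exact mem_affineSpan ℝ (by simp)
  have hd : d ∈ line a b := by
    rw [he]; exact mem_affineSpan ℝ (by simp)
  have hdc : d - c ∈ (line a b).direction := by
    have := AffineSubspace.vsub_mem_direction hd hc
    simpa using this
  rw [line, direction_affineSpan] at hdc
  rw [vectorSpan_pair] at hdc
  rw [Submodule.mem_span_singleton] at hdc
  obtain ⟨k, hk⟩ := hdc
  apply h
  rw [← hk]
  unfold xdet
  have : (a -ᵥ b : ℝ × ℝ) = a - b := rfl
  rw [this]
  simp only [Prod.smul_def, smul_eq_mul, Prod.fst_sub, Prod.snd_sub]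
  ring

abbrev P4 := (ℝ × ℝ) × (ℝ × ℝ) × (ℝ × ℝ) × (ℝ × ℝ)

def g4 (z : P4) : ℝ := xdet (z.2.1 - z.1) (z.2.2.2 - z.2.2.1)

def F4 (z : P4) : ℝ × ℝ := ipt z.1 z.2.1 z.2.2.1 z.2.2.2

lemma cont_g4 : Continuous g4 := by
  unfold g4 xdet; fun_prop

lemma contAt_F4 {z : P4} (h : g4 z ≠ 0) : ContinuousAt F4 z := by
  unfold F4 ipt
  have hnum : Continuous (fun z : P4 => xdet (z.2.2.1 - z.1) (z.2.2.2 - z.2.2.1)) := by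
    unfold xdet; fun_prop
  have hden : Continuous (fun z : P4 => xdet (z.2.1 - z.1) (z.2.2.2 - z.2.2.1)) := cont_g4
  exact continuousAt_fst.add
    ((hnum.continuousAt.div hden.continuousAt h).smul
      (continuous_snd.fst.sub continuous_fst).continuousAt)

lemma xdet_smul (s t : ℝ) (u v : ℝ × ℝ) : xdet (s • u) (t • v) = s * t * xdet u v := by
  unfold xdet
  simp only [Prod.smul_fst, Prod.smul_snd, smul_eq_mul]
  ring

/-- If `K` is dense in the triangle with noncollinear vertices `A, B, C`, then
`T(K)` is dense in the whole plane. -/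
theorem dense_interT_of_dense_in_triangle (A B C : ℝ × ℝ)
    (hABC : ¬ Collinear ℝ ({A, B, C} : Set (ℝ × ℝ)))
    (K : Set (ℝ × ℝ)) (hK : K ⊆ convexHull ℝ ({A, B, C} : Set (ℝ × ℝ)))
    (hdense : convexHull ℝ ({A, B, C} : Set (ℝ × ℝ)) ⊆ closure K) :
    Dense (interT K) := by
  -- Step 1: the triangle has nonempty interior
  have hai : AffineIndependent ℝ ![A, B, C] :=
    affineIndependent_iff_not_collinear_set.mpr hABC
  have hspan : affineSpan ℝ ({A, B, C} : Set (ℝ × ℝ)) = ⊤ := by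
    have hr : Set.range ![A, B, C] = ({A, B, C} : Set (ℝ × ℝ)) := by
      ext p
      simp [Matrix.range_cons, Matrix.range_empty]
      tauto
    have := hai.affineSpan_eq_top_iff_card_eq_finrank_add_one.mpr ?_
    · rwa [hr] at this
    · simp [Module.finrank_self]
  have hint : (interior (convexHull ℝ ({A, B, C} : Set (ℝ × ℝ)))).Nonempty := by
    rw [(convex_convexHull ℝ _).interior_nonempty_iff_affineSpan_eq_top,
      affineSpan_convexHull]
    exact hspan
  obtain ⟨G, hG⟩ := hint
  obtain ⟨r, hr, hball⟩ := Metric.isOpen_iff.mp isOpen_interior G hG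
  have hballK : Metric.ball G r ⊆ closure K := fun y hy =>
    hdense (interior_subset (hball hy))
  rw [Metric.dense_iff]
  intro x ε hε
  set v : ℝ × ℝ := x - G with hv_def
  -- Step 2: choose two small vectors with a nondegeneracy property
  obtain ⟨w₁, w₂, hw₁, hw₂, hcr⟩ :
      ∃ w₁ w₂ : ℝ × ℝ, ‖w₁‖ ≤ r / 8 ∧ ‖w₂‖ ≤ r / 8 ∧ xdet (v - w₁) (v - w₂) ≠ 0 := by
    by_cases hv : v = 0
    · refine ⟨(r / 8, 0), (0, r / 8), ?_, ?_, ?_⟩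
      · have h8 : (0:ℝ) ≤ r / 8 := by positivity
        simp [Prod.norm_def, Real.norm_eq_abs, abs_of_nonneg h8, max_le_iff, h8,
          abs_of_pos hr]
      · have h8 : (0:ℝ) ≤ r / 8 := by positivity
        simp [Prod.norm_def, Real.norm_eq_abs, abs_of_nonneg h8, max_le_iff, h8,
          abs_of_pos hr]
      · rw [hv]
        unfold xdet
        simp only [Prod.fst_sub, Prod.snd_sub, Prod.fst_zero, Prod.snd_zero]
        have : (0 - r / 8) * (0 - r / 8) - (0 - 0) * (0 - 0) = (r / 8) ^ 2 := by ring
        rw [this]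
        positivity
    · have hvn : (0:ℝ) < ‖v‖ := norm_pos_iff.mpr hv
      refine ⟨(r / (8 * ‖v‖)) • (-v.2, v.1), -((r / (8 * ‖v‖)) • (-v.2, v.1)), ?_, ?_, ?_⟩
      · rw [norm_smul]
        have : ‖((-v.2, v.1) : ℝ × ℝ)‖ = ‖v‖ := by
          simp [Prod.norm_def, Real.norm_eq_abs, max_comm]
        rw [this, Real.norm_eq_abs, abs_of_pos (by positivity)]
        have key : r / (8 * ‖v‖) * ‖v‖ = r / 8 := by
          field_simp
        linarith [key, mul_comm (r / (8 * ‖v‖)) ‖v‖]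
      · rw [norm_neg, norm_smul]
        have : ‖((-v.2, v.1) : ℝ × ℝ)‖ = ‖v‖ := by
          simp [Prod.norm_def, Real.norm_eq_abs, max_comm]
        rw [this, Real.norm_eq_abs, abs_of_pos (by positivity)]
        have key : r / (8 * ‖v‖) * ‖v‖ = r / 8 := by
          field_simp
        linarith [key, mul_comm (r / (8 * ‖v‖)) ‖v‖]
      · set c := r / (8 * ‖v‖) with hc
        have hcpos : 0 < c := by positivity
        unfold xdet
        have hv2 : 0 < v.1 ^ 2 + v.2 ^ 2 := by
          have : v.1 ≠ 0 ∨ v.2 ≠ 0 := by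
            by_contra hcon
            push_neg at hcon
            exact hv (Prod.ext hcon.1 hcon.2)
          rcases this with h | h
          · have := sq_nonneg v.2
            have h1 : 0 < v.1 ^ 2 := by positivity
            linarith
          · have := sq_nonneg v.1
            have h2 : 0 < v.2 ^ 2 := by positivity
            linarith
        simp only [Prod.fst_sub, Prod.snd_sub, Prod.fst_neg, Prod.snd_neg,
          Prod.fst_add, Prod.snd_add, Prod.smul_fst, Prod.smul_snd, smul_eq_mul,
          sub_neg_eq_add]
        have : (v.1 - c * -v.2) * (v.2 + c * v.1) - (v.2 - c * v.1) * (v.1 + c * -v.2)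
            = 2 * c * (v.1 ^ 2 + v.2 ^ 2) := by ring
        rw [this]
        positivity
  -- Step 3: build the base configuration
  set d₁ : ℝ × ℝ := v - w₁ with hd₁_def
  set d₂ : ℝ × ℝ := v - w₂ with hd₂_def
  have hd₁ : d₁ ≠ 0 := by
    intro h; apply hcr; rw [h]; unfold xdet; simp
  have hd₂ : d₂ ≠ 0 := by
    intro h; apply hcr; rw [h]; unfold xdet; simp
  set τ₁ : ℝ := r / (2 * (‖d₁‖ + r)) with hτ₁_def
  set τ₂ : ℝ := r / (2 * (‖d₂‖ + r)) with hτ₂_def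
  have hτ₁ : 0 < τ₁ := by have := norm_nonneg d₁; positivity
  have hτ₂ : 0 < τ₂ := by have := norm_nonneg d₂; positivity
  have hτd₁ : τ₁ * ‖d₁‖ ≤ r / 2 := by
    rw [hτ₁_def, div_mul_eq_mul_div, div_le_div_iff₀ (by have := norm_nonneg d₁; positivity) (by norm_num)]
    have := norm_nonneg d₁; nlinarith
  have hτd₂ : τ₂ * ‖d₂‖ ≤ r / 2 := by
    rw [hτ₂_def, div_mul_eq_mul_div, div_le_div_iff₀ (by have := norm_nonneg d₂; positivity) (by norm_num)]
    have := norm_nonneg d₂; nlinarith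
  set u₁ : ℝ × ℝ := G + w₁ with hu₁_def
  set u₂ : ℝ × ℝ := G + w₂ with hu₂_def
  set q₁ : ℝ × ℝ := u₁ + τ₁ • d₁ with hq₁_def
  set q₂ : ℝ × ℝ := u₂ + τ₂ • d₂ with hq₂_def
  -- memberships in the ball
  have hu₁b : u₁ ∈ Metric.ball G r := by
    rw [Metric.mem_ball, dist_eq_norm, hu₁_def, add_sub_cancel_left]
    linarith
  have hu₂b : u₂ ∈ Metric.ball G r := by
    rw [Metric.mem_ball, dist_eq_norm, hu₂_def, add_sub_cancel_left]
    linarith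
  have hq₁b : q₁ ∈ Metric.ball G r := by
    rw [Metric.mem_ball, dist_eq_norm, hq₁_def, hu₁_def]
    have h1 : G + w₁ + τ₁ • d₁ - G = w₁ + τ₁ • d₁ := by abel
    rw [h1]
    calc ‖w₁ + τ₁ • d₁‖ ≤ ‖w₁‖ + ‖τ₁ • d₁‖ := norm_add_le _ _
      _ = ‖w₁‖ + τ₁ * ‖d₁‖ := by rw [norm_smul, Real.norm_eq_abs, abs_of_pos hτ₁]
      _ < r := by linarith
  have hq₂b : q₂ ∈ Metric.ball G r := by
    rw [Metric.mem_ball, dist_eq_norm, hq₂_def, hu₂_def]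
    have h1 : G + w₂ + τ₂ • d₂ - G = w₂ + τ₂ • d₂ := by abel
    rw [h1]
    calc ‖w₂ + τ₂ • d₂‖ ≤ ‖w₂‖ + ‖τ₂ • d₂‖ := norm_add_le _ _
      _ = ‖w₂‖ + τ₂ * ‖d₂‖ := by rw [norm_smul, Real.norm_eq_abs, abs_of_pos hτ₂]
      _ < r := by linarith
  -- x lies on both base lines
  have hq₁u₁ : q₁ - u₁ = τ₁ • d₁ := by rw [hq₁_def]; abel
  have hq₂u₂ : q₂ - u₂ = τ₂ • d₂ := by rw [hq₂_def]; abel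
  have hx₁ : x = u₁ + (1 / τ₁) • (q₁ - u₁) := by
    rw [hq₁u₁, smul_smul, one_div, inv_mul_cancel₀ (ne_of_gt hτ₁), one_smul,
      hu₁_def, hd₁_def, hv_def]
    abel
  have hx₂ : x = u₂ + (1 / τ₂) • (q₂ - u₂) := by
    rw [hq₂u₂, smul_smul, one_div, inv_mul_cancel₀ (ne_of_gt hτ₂), one_smul,
      hu₂_def, hd₂_def, hv_def]
    abel
  -- nondegeneracy of the base configuration
  have hdet₀ : xdet (q₁ - u₁) (q₂ - u₂) ≠ 0 := by
    rw [hq₁u₁, hq₂u₂, xdet_smul]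
    exact mul_ne_zero (mul_ne_zero (ne_of_gt hτ₁) (ne_of_gt hτ₂)) hcr
  set z₀ : P4 := (u₁, q₁, u₂, q₂) with hz₀_def
  have hg₀ : g4 z₀ ≠ 0 := hdet₀
  have hFz₀ : F4 z₀ = x :=
    ipt_eq u₁ q₁ u₂ q₂ x (1 / τ₁) (1 / τ₂) hdet₀ hx₁ hx₂
  have hne₁ : u₁ ≠ q₁ := by
    intro h
    have : q₁ - u₁ = 0 := by rw [← h]; abel
    rw [hq₁u₁] at this
    exact hd₁ (by simpa [smul_eq_zero, ne_of_gt hτ₁] using this)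
  have hne₂ : u₂ ≠ q₂ := by
    intro h
    have : q₂ - u₂ = 0 := by rw [← h]; abel
    rw [hq₂u₂] at this
    exact hd₂ (by simpa [smul_eq_zero, ne_of_gt hτ₂] using this)
  -- Step 4: the good set is a neighborhood of z₀
  have hN : (F4 ⁻¹' (Metric.ball x ε) ∩ ({z : P4 | g4 z ≠ 0} ∩
      ({z : P4 | z.1 ≠ z.2.1} ∩ {z : P4 | z.2.2.1 ≠ z.2.2.2}))) ∈ nhds z₀ := by
    refine Filter.inter_mem ?_ (Filter.inter_mem ?_ (Filter.inter_mem ?_ ?_))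
    · exact (contAt_F4 hg₀).preimage_mem_nhds (by rw [hFz₀]; exact Metric.ball_mem_nhds x hε)
    · exact (isOpen_compl_singleton.preimage cont_g4).mem_nhds hg₀
    · exact (isOpen_ne_fun continuous_fst continuous_snd.fst).mem_nhds hne₁
    · exact (isOpen_ne_fun continuous_snd.snd.fst continuous_snd.snd.snd).mem_nhds hne₂
  -- z₀ is in the closure of K⁴
  have hz₀cl : z₀ ∈ closure (K ×ˢ (K ×ˢ (K ×ˢ K))) := by
    rw [closure_prod_eq, closure_prod_eq, closure_prod_eq]
    exact ⟨hballK hu₁b, hballK hq₁b, hballK hu₂b, hballK hq₂b⟩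
  obtain ⟨z, hzN, hzK⟩ := mem_closure_iff_nhds.mp hz₀cl _ hN
  obtain ⟨⟨hzb, hzg, hzne₁, hzne₂⟩, haK, hbK, hcK, hdK⟩ :=
    And.intro hzN (by exact hzK : z.1 ∈ K ∧ z.2.1 ∈ K ∧ z.2.2.1 ∈ K ∧ z.2.2.2 ∈ K)
  refine ⟨F4 z, hzb, z.1, haK, z.2.1, hbK, z.2.2.1, hcK, z.2.2.2, hdK,
    hzne₁, hzne₂, line_ne _ _ _ _ hzg, ipt_mem_left _ _ _ _, ipt_mem_right _ _ _ _ hzg⟩
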